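/- Under the abstract Green identity setting, the trace operator T : D ⊂ H₊ → 𝔥 × 𝔥 is closable, where H₊ = dom(A*) is equipped with the graph norm of A*. That is, if uₙ → 0 in the graph norm of A* and (Γ₀uₙ, Γ₁uₙ) → (f, g) in 𝔥 × 𝔥, then f = g = 0. -/

import Mathlib

open scoped InnerProductSpace
open Filter

/-- In the abstract Green identity setting, the trace operator
`T : D ⊆ H₊ → 𝔥 × 𝔥` is closable, where `H₊ = dom A*` carries the graph norm of `A*`:
if `uₙ → 0` in the graph norm of `A*` (i.e. `uₙ → 0` and `A* uₙ → 0` in `H`) and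
`(Γ₀ uₙ, Γ₁ uₙ) → (f, g)` in `𝔥 × 𝔥`, then `f = 0` and `g = 0`. -/
theorem trace_operator_closable
    {H 𝔥 : Type*}
    [NormedAddCommGroup H] [InnerProductSpace ℂ H] [CompleteSpace H]
    [NormedAddCommGroup 𝔥] [InnerProductSpace ℂ 𝔥] [CompleteSpace 𝔥]
    (A : H →ₗ.[ℂ] H)
    (hdense : Dense (A.domain : Set H))
    (hclosed : A.IsClosed)
    (hsym : ∀ u v : A.domain, ⟪A u, (v : H)⟫_ℂ = ⟪(u : H), A v⟫_ℂ)
    (D : Submodule ℂ H)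
    (hDsub : D ≤ A.adjoint.domain)
    (hAD : A.domain ≤ D)
    (T : D →ₗ[ℂ] 𝔥 × 𝔥)
    (hTdense : DenseRange T)
    (hGreen : ∀ u v : D,
      ⟪A.adjoint ⟨(u : H), hDsub u.2⟩, (v : H)⟫_ℂ
          - ⟪(u : H), A.adjoint ⟨(v : H), hDsub v.2⟩⟫_ℂ
        = ⟪(T u).2, (T v).1⟫_ℂ - ⟪(T u).1, (T v).2⟫_ℂ)
    (u : ℕ → D) (f g : 𝔥)
    (hu0 : Tendsto (fun n => ((u n : H))) atTop (nhds 0))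
    (hAu0 : Tendsto (fun n => A.adjoint ⟨((u n : H)), hDsub (u n).2⟩) atTop (nhds 0))
    (hT : Tendsto (fun n => T (u n)) atTop (nhds (f, g))) :
    f = 0 ∧ g = 0 := by
  -- For each fixed `v ∈ D`, pass to the limit in the Green identity.
  have key : ∀ v : D, ⟪g, (T v).1⟫_ℂ - ⟪f, (T v).2⟫_ℂ = 0 := by
    intro v
    have h1 : Tendsto (fun n => ⟪(T (u n)).2, (T v).1⟫_ℂ - ⟪(T (u n)).1, (T v).2⟫_ℂ)
        atTop (nhds (⟪g, (T v).1⟫_ℂ - ⟪f, (T v).2⟫_ℂ)) := by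
      have h2 : Tendsto (fun n => (T (u n)).2) atTop (nhds g) :=
        (continuous_snd.tendsto _).comp hT
      have h3 : Tendsto (fun n => (T (u n)).1) atTop (nhds f) :=
        (continuous_fst.tendsto _).comp hT
      have ha : Tendsto (fun n => ⟪(T (u n)).2, (T v).1⟫_ℂ) atTop (nhds ⟪g, (T v).1⟫_ℂ) :=
        h2.inner tendsto_const_nhds
      have hb : Tendsto (fun n => ⟪(T (u n)).1, (T v).2⟫_ℂ) atTop (nhds ⟪f, (T v).2⟫_ℂ) :=
        h3.inner tendsto_const_nhds
      exact ha.sub hb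
    have h4 : Tendsto (fun n => ⟪(T (u n)).2, (T v).1⟫_ℂ - ⟪(T (u n)).1, (T v).2⟫_ℂ)
        atTop (nhds 0) := by
      have h5 : Tendsto (fun n =>
          ⟪A.adjoint ⟨((u n : H)), hDsub (u n).2⟩, (v : H)⟫_ℂ
            - ⟪((u n : H)), A.adjoint ⟨(v : H), hDsub v.2⟩⟫_ℂ) atTop (nhds 0) := by
        have ha : Tendsto (fun n => ⟪A.adjoint ⟨((u n : H)), hDsub (u n).2⟩, (v : H)⟫_ℂ)
            atTop (nhds ⟪(0 : H), (v : H)⟫_ℂ) := hAu0.inner tendsto_const_nhds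
        have hb : Tendsto (fun n => ⟪((u n : H)), A.adjoint ⟨(v : H), hDsub v.2⟩⟫_ℂ)
            atTop (nhds ⟪(0 : H), A.adjoint ⟨(v : H), hDsub v.2⟩⟫_ℂ) :=
          hu0.inner tendsto_const_nhds
        simpa using ha.sub hb
      exact h5.congr (fun n => hGreen (u n) v)
    exact tendsto_nhds_unique h1 h4
  -- The continuous functional `p ↦ ⟪g, p.1⟫ - ⟪f, p.2⟫` vanishes on the dense range of `T`.
  have hall : ∀ p : 𝔥 × 𝔥, ⟪g, p.1⟫_ℂ - ⟪f, p.2⟫_ℂ = 0 := by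
    have hcont : Continuous (fun p : 𝔥 × 𝔥 => ⟪g, p.1⟫_ℂ - ⟪f, p.2⟫_ℂ) :=
      (continuous_const.inner continuous_fst).sub (continuous_const.inner continuous_snd)
    have hclosedset : IsClosed {p : 𝔥 × 𝔥 | ⟪g, p.1⟫_ℂ - ⟪f, p.2⟫_ℂ = 0} :=
      isClosed_eq hcont continuous_const
    have hsubset : Set.range T ⊆ {p : 𝔥 × 𝔥 | ⟪g, p.1⟫_ℂ - ⟪f, p.2⟫_ℂ = 0} := by
      rintro _ ⟨v, rfl⟩; exact key v
    intro p
    have : p ∈ closure (Set.range T) := hTdense p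
    exact hclosedset.closure_subset (closure_mono hsubset this)
  have hfg := hall (g, -f)
  simp only [inner_neg_right] at hfg
  have : ⟪g, g⟫_ℂ + ⟪f, f⟫_ℂ = 0 := by ring_nf at hfg ⊢; linear_combination hfg
  have hre : ‖g‖ ^ 2 + ‖f‖ ^ 2 = 0 := by
    have h := congrArg RCLike.re this
    simpa [map_add, inner_self_eq_norm_sq, ← Complex.ofReal_pow] using h
  have hg : ‖g‖ = 0 := by nlinarith [norm_nonneg f, norm_nonneg g, sq_nonneg (‖f‖), sq_nonneg (‖g‖)]
  have hf : ‖f‖ = 0 := by nlinarith [norm_nonneg f, norm_nonneg g]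
  exact ⟨norm_eq_zero.mp hf, norm_eq_zero.mp hg⟩
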